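/- Let η : ℝ^n → ℝ be a C² convex function on an open convex set K such that det^{1/n}[(1−s)I_n + s·Hess η(x)] = (1−s) + s·det^{1/n}[Hess η(x)] for all x ∈ K and det[Hess η(x)] = c > 0 is constant on K, for some fixed s ∈ (0,1). Then Hess η(x) = c^{1/n}·I_n for every x ∈ K, so ∇η(x) = c^{1/n}x + x₀ on K for some fixed x₀ ∈ ℝ^n (K connected). -/

import Mathlib

open Real Matrix

lemma euclid_sum_single {n : ℕ} (v : EuclideanSpace ℝ (Fin n)) :
    ∑ i, v i • EuclideanSpace.single i (1:ℝ) = v := by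
  simpa [EuclideanSpace.basisFun_apply, EuclideanSpace.basisFun_repr] using
    (EuclideanSpace.basisFun (Fin n) ℝ).sum_repr v

lemma bilin_expand {n : ℕ} (B : EuclideanSpace ℝ (Fin n) →L[ℝ] EuclideanSpace ℝ (Fin n) →L[ℝ] ℝ)
    (v w : EuclideanSpace ℝ (Fin n)) :
    B v w = ∑ i, ∑ j, v i * w j *
      B (EuclideanSpace.single i 1) (EuclideanSpace.single j 1) := by
  conv_lhs => rw [← euclid_sum_single v]
  rw [map_sum, ContinuousLinearMap.sum_apply]
  refine Finset.sum_congr rfl fun i _ => ?_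
  rw [_root_.map_smul, ContinuousLinearMap.smul_apply, smul_eq_mul]
  conv_lhs => rw [← euclid_sum_single w]
  rw [map_sum, Finset.mul_sum]
  refine Finset.sum_congr rfl fun j _ => ?_
  rw [_root_.map_smul, smul_eq_mul]
  ring

lemma deriv_nonneg_of_monotoneOn {h : ℝ → ℝ} {d ε : ℝ} (hε : 0 < ε)
    (hm : MonotoneOn h (Set.Ioo (-ε) ε)) (hd : HasDerivAt h d 0) : 0 ≤ d := by
  have h1 := hasDerivAt_iff_tendsto_slope.mp hd
  have h2 : Filter.Tendsto (slope h 0) (nhdsWithin 0 (Set.Ioi 0)) (nhds d) :=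
    h1.mono_left (nhdsWithin_mono _ (fun t ht => ne_of_gt ht))
  refine ge_of_tendsto h2 ?_
  filter_upwards [Ioo_mem_nhdsGT_of_mem ⟨le_refl (0:ℝ), hε⟩] with t ht
  have h0mem : (0:ℝ) ∈ Set.Ioo (-ε) ε := ⟨by linarith, hε⟩
  have htmem : t ∈ Set.Ioo (-ε) ε := ⟨by linarith [ht.1], ht.2⟩
  have := hm h0mem htmem ht.1.le
  rw [slope_def_field]
  apply div_nonneg (by linarith) (by linarith [ht.1])

lemma strictconv_log_affine_exp {s : ℝ} (hs : 0 < s) (hs1 : s < 1) :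
    StrictConvexOn ℝ Set.univ (fun t : ℝ => Real.log (1 - s + s * Real.exp t)) := by
  have hu : ∀ t : ℝ, 0 < 1 - s + s * Real.exp t := fun t =>
    add_pos (by linarith) (mul_pos hs (Real.exp_pos t))
  have hud : ∀ t : ℝ, HasDerivAt (fun t => 1 - s + s * Real.exp t) (s * Real.exp t) t := fun t =>
    ((Real.hasDerivAt_exp t).const_mul s).const_add (1 - s)
  have hfd : ∀ t : ℝ, HasDerivAt (fun t => Real.log (1 - s + s * Real.exp t))
      (s * Real.exp t / (1 - s + s * Real.exp t)) t := fun t => (hud t).log (hu t).ne'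
  have hderiv : deriv (fun t => Real.log (1 - s + s * Real.exp t))
      = fun t => s * Real.exp t / (1 - s + s * Real.exp t) := funext fun t => (hfd t).deriv
  apply strictConvexOn_univ_of_deriv2_pos
  · exact (continuous_const.add (continuous_const.mul Real.continuous_exp)).log
      fun t => (hu t).ne'
  · intro t
    have hit : deriv^[2] (fun t => Real.log (1 - s + s * Real.exp t)) t
        = deriv (deriv (fun t => Real.log (1 - s + s * Real.exp t))) t := by
      simp [Function.iterate_succ, Function.iterate_one]
    rw [hit, hderiv]
    have hd2 : HasDerivAt (fun t => s * Real.exp t / (1 - s + s * Real.exp t))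
        ((s * Real.exp t * (1 - s + s * Real.exp t) - s * Real.exp t * (s * Real.exp t))
          / (1 - s + s * Real.exp t) ^ 2) t :=
      ((Real.hasDerivAt_exp t).const_mul s).div (hud t) (hu t).ne'
    rw [hd2.deriv]
    have hnum : s * Real.exp t * (1 - s + s * Real.exp t) - s * Real.exp t * (s * Real.exp t)
        = s * Real.exp t * (1 - s) := by ring
    rw [hnum]
    apply div_pos
    · exact mul_pos (mul_pos hs (Real.exp_pos t)) (by linarith)
    · exact pow_pos (hu t) 2

lemma matrix_step {n : ℕ} (hn : 1 ≤ n) {s c : ℝ} (hs : 0 < s) (hs1 : s < 1) (hc : 0 < c)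
    {A : Matrix (Fin n) (Fin n) ℝ} (hA : A.PosSemidef) (hdetA : A.det = c)
    (heq : ((1 - s) • (1 : Matrix (Fin n) (Fin n) ℝ) + s • A).det ^ (1 / (n : ℝ))
        = (1 - s) + s * A.det ^ (1 / (n : ℝ))) :
    A = c ^ (1 / (n : ℝ)) • 1 := by
  have hH : A.IsHermitian := hA.1
  set l : Fin n → ℝ := hH.eigenvalues with hl
  have hprod : ∏ i, l i = c := by
    have := hH.det_eq_prod_eigenvalues
    rw [hdetA] at this
    simpa using this.symm
  have hnn : ∀ i, 0 ≤ l i := fun i => hA.eigenvalues_nonneg i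
  have hpos : ∀ i, 0 < l i := by
    intro i
    rcases (hnn i).lt_or_eq with h | h
    · exact h
    · exfalso
      have : ∏ j, l j = 0 := Finset.prod_eq_zero (Finset.mem_univ i) h.symm
      rw [hprod] at this; linarith
  set U : Matrix (Fin n) (Fin n) ℝ := (hH.eigenvectorUnitary : Matrix (Fin n) (Fin n) ℝ) with hU
  have hUU : U * star U = 1 := Unitary.coe_mul_star_self _
  have hUU' : star U * U = 1 := Unitary.coe_star_mul_self _
  have hspec : A = U * diagonal (fun i => l i) * star U := by
    have := hH.spectral_theorem
    simpa using this
  have hMdiag : (1 - s) • (1 : Matrix (Fin n) (Fin n) ℝ) + s • A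
      = U * diagonal (fun i => 1 - s + s * l i) * star U := by
    have h1 : diagonal (fun i : Fin n => 1 - s + s * l i)
        = (1 - s) • (1 : Matrix (Fin n) (Fin n) ℝ) + s • diagonal (fun i => l i) := by
      rw [smul_one_eq_diagonal]
      rw [← diagonal_smul, ← diagonal_add]
      rfl
    rw [h1, Matrix.mul_add, Matrix.add_mul, Matrix.mul_smul, Matrix.smul_mul,
      Matrix.mul_one, hUU, Matrix.mul_smul, Matrix.smul_mul, ← hspec]
  have hdetM : ((1 - s) • (1 : Matrix (Fin n) (Fin n) ℝ) + s • A).det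
      = ∏ i, (1 - s + s * l i) := by
    rw [hMdiag, Matrix.det_mul, Matrix.det_mul, mul_comm, ← mul_assoc, ← Matrix.det_mul, hUU']
    simp [Matrix.det_diagonal]
  have hR : 0 < 1 - s + s * c ^ (1 / (n:ℝ)) :=
    add_pos (by linarith) (mul_pos hs (Real.rpow_pos_of_pos hc _))
  have hfac : ∀ i, 0 < 1 - s + s * l i := fun i => add_pos (by linarith) (mul_pos hs (hpos i))
  have hP : 0 < ∏ i, (1 - s + s * l i) := Finset.prod_pos fun i _ => hfac i
  have heq' : (∏ i, (1 - s + s * l i)) ^ (1 / (n:ℝ)) = 1 - s + s * c ^ (1/(n:ℝ)) := by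
    rw [← hdetM, heq, hdetA]
  have hlogP : (1/(n:ℝ)) * Real.log (∏ i, (1 - s + s * l i))
      = Real.log (1 - s + s * c ^ (1/(n:ℝ))) := by
    rw [← Real.log_rpow hP, heq']
  have hn0 : (n:ℝ) ≠ 0 := by
    exact_mod_cast Nat.one_le_iff_ne_zero.mp hn
  have hw : ∑ _i : Fin n, (1/(n:ℝ)) = 1 := by
    rw [Finset.sum_const, Finset.card_univ, Fintype.card_fin, nsmul_eq_mul]
    field_simp
  set f := fun t : ℝ => Real.log (1 - s + s * Real.exp t) with hf
  set p := fun i => Real.log (l i) with hp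
  have hsum_p : ∑ i, (1/(n:ℝ)) • p i = (1/(n:ℝ)) * Real.log c := by
    simp only [smul_eq_mul, ← Finset.mul_sum]
    congr 1
    rw [← Real.log_prod (fun i _ => (hpos i).ne'), hprod]
  have hfp : ∀ i, f (p i) = Real.log (1 - s + s * l i) := fun i => by
    simp [hf, hp, Real.exp_log (hpos i)]
  have hkey : f (∑ i, (1/(n:ℝ)) • p i) = ∑ i, (1/(n:ℝ)) • f (p i) := by
    rw [hsum_p]
    have h1 : Real.exp ((1/(n:ℝ)) * Real.log c) = c ^ (1/(n:ℝ)) := by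
      rw [Real.rpow_def_of_pos hc, mul_comm]
    have h2 : ∑ i, (1/(n:ℝ)) • f (p i) = (1/(n:ℝ)) * ∑ i, Real.log (1 - s + s * l i) := by
      simp only [smul_eq_mul, hfp, Finset.mul_sum]
    rw [h2, ← Real.log_prod (fun i _ => (hfac i).ne'), hlogP]
    simp only [hf, h1]
  have hpe : ∀ i j : Fin n, p i = p j := by
    by_contra hcon
    push_neg at hcon
    obtain ⟨i, j, hij⟩ := hcon
    have hlt := (strictconv_log_affine_exp hs hs1).map_sum_lt
      (w := fun _ : Fin n => 1/(n:ℝ)) (p := p) (t := Finset.univ)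
      (fun i _ => by positivity) hw (fun i _ => Set.mem_univ _)
      ⟨i, Finset.mem_univ _, j, Finset.mem_univ _, hij⟩
    exact absurd hkey (ne_of_lt hlt)
  have hleq : ∀ i j, l i = l j := fun i j => by
    rw [← Real.exp_log (hpos i), ← Real.exp_log (hpos j)]
    exact congrArg Real.exp (hpe i j)
  have i0 : Fin n := ⟨0, hn⟩
  have hμn : (l i0) ^ n = c := by
    rw [← hprod, Finset.prod_congr rfl fun j _ => (hleq j i0), Finset.prod_const,
      Finset.card_univ, Fintype.card_fin]
  have hμ : l i0 = c ^ (1/(n:ℝ)) := by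
    rw [← hμn, ← Real.rpow_natCast (l i0) n, ← Real.rpow_mul (hpos i0).le,
      mul_one_div, div_self hn0, Real.rpow_one]
  have hdiag : diagonal (fun i => l i) = (l i0) • (1 : Matrix (Fin n) (Fin n) ℝ) := by
    have hfun : (fun i : Fin n => l i) = fun _ : Fin n => l i0 := funext fun j => hleq j i0
    rw [smul_one_eq_diagonal, hfun]
  rw [hspec, hdiag, Matrix.mul_smul, Matrix.smul_mul, Matrix.mul_one, hUU, hμ]

lemma snd_deriv_nonneg {n : ℕ} {K : Set (EuclideanSpace ℝ (Fin n))} (hK : IsOpen K)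
    {η : EuclideanSpace ℝ (Fin n) → ℝ} (hsm : ContDiffOn ℝ 2 η K)
    (hconv : ConvexOn ℝ K η) {x : EuclideanSpace ℝ (Fin n)} (hx : x ∈ K)
    (v : EuclideanSpace ℝ (Fin n)) :
    0 ≤ fderiv ℝ (fderiv ℝ η) x v v := by
  have hdiff : ∀ y ∈ K, DifferentiableAt ℝ η y := fun y hy =>
    (hsm.contDiffAt (hK.mem_nhds hy)).differentiableAt two_ne_zero
  have hfd : ∀ y ∈ K, DifferentiableAt ℝ (fderiv ℝ η) y := fun y hy =>
    ((hsm.contDiffAt (hK.mem_nhds hy)).fderiv_right (le_refl 2)).differentiableAt one_ne_zero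
  set c : ℝ → EuclideanSpace ℝ (Fin n) := fun t => x + t • v with hcdef
  have hcont : Continuous c := continuous_const.add (continuous_id.smul continuous_const)
  have h0 : (0:ℝ) ∈ c ⁻¹' K := by simp [hcdef, hx]
  obtain ⟨ε, hε, hball⟩ := Metric.isOpen_iff.mp (hK.preimage hcont) 0 h0
  rw [Real.ball_eq_Ioo, zero_sub, zero_add] at hball
  have hline : (⇑(AffineMap.lineMap x (x + v) : ℝ →ᵃ[ℝ] EuclideanSpace ℝ (Fin n))) = c := by
    funext t
    simp [AffineMap.lineMap_apply, hcdef]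
    abel
  have hgconv : ConvexOn ℝ (Set.Ioo (-ε) ε) (η ∘ c) := by
    have := hconv.comp_affineMap (AffineMap.lineMap x (x + v) : ℝ →ᵃ[ℝ] EuclideanSpace ℝ (Fin n))
    rw [hline] at this
    exact this.subset hball (convex_Ioo _ _)
  have hcd : ∀ t : ℝ, HasDerivAt c v t := by
    intro t
    have := ((hasDerivAt_id t).smul_const v).const_add x
    rw [one_smul] at this
    exact this
  have hgd : ∀ t ∈ Set.Ioo (-ε) ε, HasDerivAt (η ∘ c) (fderiv ℝ η (c t) v) t := by
    intro t ht
    exact ((hdiff _ (hball ht)).hasFDerivAt).comp_hasDerivAt t (hcd t)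
  have hmono : MonotoneOn (fun t => fderiv ℝ η (c t) v) (Set.Ioo (-ε) ε) := by
    intro a ha b hb hab
    have h1 := hgconv.monotoneOn_deriv (fun t ht => (hgd t ht).differentiableAt) ha hb hab
    rwa [(hgd a ha).deriv, (hgd b hb).deriv] at h1
  have hc0 : c 0 = x := by simp [hcdef]
  have hB : HasFDerivAt (fderiv ℝ η) (fderiv ℝ (fderiv ℝ η) x) x := (hfd x hx).hasFDerivAt
  have happ : HasFDerivAt (fun y => fderiv ℝ η y v)
      ((ContinuousLinearMap.apply ℝ ℝ v).comp (fderiv ℝ (fderiv ℝ η) x)) x :=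
    (ContinuousLinearMap.apply ℝ ℝ v).hasFDerivAt.comp x hB
  have hh : HasDerivAt (fun t => fderiv ℝ η (c t) v) (fderiv ℝ (fderiv ℝ η) x v v) 0 := by
    have h2 : HasFDerivAt (fun y => fderiv ℝ η y v)
        ((ContinuousLinearMap.apply ℝ ℝ v).comp (fderiv ℝ (fderiv ℝ η) x)) (c 0) := by
      rw [hc0]; exact happ
    have := h2.comp_hasDerivAt 0 (hcd 0)
    exact this
  exact deriv_nonneg_of_monotoneOn hε hmono hh

/-- The Hessian matrix of `η` at `x`, via the second iterated Fréchet derivative. -/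
noncomputable def hess {n : ℕ} (η : EuclideanSpace ℝ (Fin n) → ℝ)
    (x : EuclideanSpace ℝ (Fin n)) : Matrix (Fin n) (Fin n) ℝ :=
  Matrix.of fun i j =>
    iteratedFDeriv ℝ 2 η x ![EuclideanSpace.single i (1 : ℝ), EuclideanSpace.single j (1 : ℝ)]

lemma hess_apply {n : ℕ} (η : EuclideanSpace ℝ (Fin n) → ℝ) (x : EuclideanSpace ℝ (Fin n))
    (i j : Fin n) :
    hess η x i j = fderiv ℝ (fderiv ℝ η) x (EuclideanSpace.single i (1:ℝ))
      (EuclideanSpace.single j (1:ℝ)) := by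
  show iteratedFDeriv ℝ 2 η x ![_, _] = _
  rw [iteratedFDeriv_two_apply]
  simp

/-- Equality in the Minkowski determinant inequality for `(1-s)Iₙ + s Hess η`,
together with a constant determinant, forces `Hess η = c^{1/n} Iₙ` and
`∇η(x) = c^{1/n} x + x₀`. -/
theorem hessian_homothety (n : ℕ) (hn : 1 ≤ n) (s c : ℝ) (hs : 0 < s) (hs1 : s < 1)
    (hc : 0 < c) (K : Set (EuclideanSpace ℝ (Fin n))) (hK : IsOpen K) (hKconv : Convex ℝ K)
    (η : EuclideanSpace ℝ (Fin n) → ℝ) (hsm : ContDiffOn ℝ 2 η K)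
    (hconv : ConvexOn ℝ K η)
    (hdet : ∀ x ∈ K,
      ((1 - s) • (1 : Matrix (Fin n) (Fin n) ℝ) + s • hess η x).det ^ (1 / (n : ℝ)) =
        (1 - s) + s * (hess η x).det ^ (1 / (n : ℝ)))
    (hconst : ∀ x ∈ K, (hess η x).det = c) :
    (∀ x ∈ K, hess η x = c ^ (1 / (n : ℝ)) • (1 : Matrix (Fin n) (Fin n) ℝ)) ∧
    ∃ x₀ : EuclideanSpace ℝ (Fin n), ∀ x ∈ K,
      gradient η x = c ^ (1 / (n : ℝ)) • x + x₀ := by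
  -- Positive semidefiniteness of the Hessian matrix
  have hpsd : ∀ x ∈ K, (hess η x).PosSemidef := by
    intro x hx
    have hsymm := (hsm.contDiffAt (hK.mem_nhds hx)).isSymmSndFDerivAt (by simp)
    rw [Matrix.posSemidef_iff_dotProduct_mulVec]
    constructor
    · ext i j
      rw [Matrix.conjTranspose_apply, star_trivial, hess_apply, hess_apply]
      exact hsymm.eq _ _
    · intro y
      rw [star_trivial]
      set v : EuclideanSpace ℝ (Fin n) := (WithLp.equiv 2 (Fin n → ℝ)).symm y with hv
      have h1 := snd_deriv_nonneg hK hsm hconv hx v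
      rw [bilin_expand] at h1
      have h2 : y ⬝ᵥ (hess η x) *ᵥ y
          = ∑ i, ∑ j, v i * v j * fderiv ℝ (fderiv ℝ η) x
            (EuclideanSpace.single i 1) (EuclideanSpace.single j 1) := by
        simp only [dotProduct, mulVec, Finset.mul_sum]
        refine Finset.sum_congr rfl fun i _ => Finset.sum_congr rfl fun j _ => ?_
        rw [hess_apply]
        have hvy : ∀ k, v k = y k := fun _ => rfl
        show y i * (fderiv ℝ (fderiv ℝ η) x _ _ * y j) = _
        rw [hvy, hvy]
        ring
      rw [h2]
      exact h1
  have hpart1 : ∀ x ∈ K, hess η x = c ^ (1 / (n : ℝ)) • (1 : Matrix (Fin n) (Fin n) ℝ) :=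
    fun x hx => matrix_step hn hs hs1 hc (hpsd x hx) (hconst x hx) (hdet x hx)
  refine ⟨hpart1, ?_⟩
  set a : ℝ := c ^ (1 / (n : ℝ)) with ha
  -- the second derivative is a multiple of the inner product
  have hBv : ∀ x ∈ K, ∀ v w : EuclideanSpace ℝ (Fin n),
      fderiv ℝ (fderiv ℝ η) x v w = a * ∑ i, v i * w i := by
    intro x hx v w
    rw [bilin_expand]
    have hentry : ∀ i j : Fin n, fderiv ℝ (fderiv ℝ η) x
        (EuclideanSpace.single i (1:ℝ)) (EuclideanSpace.single j (1:ℝ))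
        = a * (if i = j then 1 else 0) := by
      intro i j
      rw [← hess_apply, hpart1 x hx]
      simp [Matrix.smul_apply, Matrix.one_apply]
    simp only [hentry, mul_ite, mul_one, mul_zero]
    rw [Finset.mul_sum]
    refine Finset.sum_congr rfl fun i _ => ?_
    rw [Finset.sum_ite_eq]
    simp [mul_comm]
  -- derivative of the gradient
  have hgradD : ∀ x ∈ K, HasFDerivAt (gradient η)
      (a • ContinuousLinearMap.id ℝ (EuclideanSpace ℝ (Fin n))) x := by
    intro x hx
    have hfd : DifferentiableAt ℝ (fderiv ℝ η) x :=
      ((hsm.contDiffAt (hK.mem_nhds hx)).fderiv_right (le_refl 2)).differentiableAt one_ne_zero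
    have hB : HasFDerivAt (fderiv ℝ η) (fderiv ℝ (fderiv ℝ η) x) x := hfd.hasFDerivAt
    set T := (InnerProductSpace.toDual ℝ (EuclideanSpace ℝ (Fin n))).symm with hT
    set L : (EuclideanSpace ℝ (Fin n) →L[ℝ] ℝ) →L[ℝ] EuclideanSpace ℝ (Fin n) :=
      ⟨⟨⟨fun φ => T φ, fun φ ψ => map_add T φ ψ⟩, fun r φ => by
        simp only [RingHom.id_apply]
        rw [LinearIsometryEquiv.map_smulₛₗ]
        simp [starRingEnd_apply]⟩, T.continuous⟩ with hL
    have hgr : gradient η = fun y => L (fderiv ℝ η y) := rfl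
    have hcomp : HasFDerivAt (gradient η) (L.comp (fderiv ℝ (fderiv ℝ η) x)) x := by
      rw [hgr]
      exact L.hasFDerivAt.comp x hB
    have heq : L.comp (fderiv ℝ (fderiv ℝ η) x)
        = a • ContinuousLinearMap.id ℝ (EuclideanSpace ℝ (Fin n)) := by
      refine ContinuousLinearMap.ext fun v => ?_
      apply ext_inner_right ℝ
      intro w
      rw [ContinuousLinearMap.comp_apply]
      have hLv : (L (fderiv ℝ (fderiv ℝ η) x v) : EuclideanSpace ℝ (Fin n))
          = T (fderiv ℝ (fderiv ℝ η) x v) := rfl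
      rw [hLv, hT, InnerProductSpace.toDual_symm_apply, hBv x hx v w]
      simp only [ContinuousLinearMap.smul_apply, ContinuousLinearMap.id_apply,
        real_inner_smul_left]
      rw [PiLp.inner_apply]
      simp [RCLike.inner_apply, Finset.mul_sum]
      exact Finset.sum_congr rfl fun i _ => by ring
    rw [← heq]
    exact hcomp
  -- the function gradient η y - a • y is locally constant on K
  have hGd : ∀ x ∈ K, HasFDerivAt
      (fun y : EuclideanSpace ℝ (Fin n) => gradient η y - a • y)
      (0 : EuclideanSpace ℝ (Fin n) →L[ℝ] EuclideanSpace ℝ (Fin n)) x := by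
    intro x hx
    have h2 : HasFDerivAt (fun y : EuclideanSpace ℝ (Fin n) => a • y)
        (a • ContinuousLinearMap.id ℝ (EuclideanSpace ℝ (Fin n))) x :=
      (hasFDerivAt_id x).const_smul a
    have h3 := (hgradD x hx).sub h2
    simp at h3
    exact h3
  rcases K.eq_empty_or_nonempty with hKe | ⟨x₁, hx₁⟩
  · exact ⟨0, fun x hx => absurd hx (by rw [hKe]; exact Set.notMem_empty x)⟩
  · refine ⟨gradient η x₁ - a • x₁, fun x hx => ?_⟩
    have hconst2 : (fun y : EuclideanSpace ℝ (Fin n) => gradient η y - a • y) x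
        = (fun y : EuclideanSpace ℝ (Fin n) => gradient η y - a • y) x₁ :=
      hKconv.is_const_of_fderivWithin_eq_zero
        (fun y hy => (hGd y hy).differentiableAt.differentiableWithinAt)
        (fun y hy => by
          rw [fderivWithin_of_mem_nhds (hK.mem_nhds hy)]
          exact (hGd y hy).fderiv) hx hx₁
    have h3 : gradient η x - a • x = gradient η x₁ - a • x₁ := hconst2
    rw [sub_eq_iff_eq_add] at h3
    rw [h3]
    abel
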